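/- Let H be a finite group acting on a finite set Z, let σ : H ≃* H be an automorphism, and let F : Z → Z be a map satisfying F(h • z) = σ(h) • F(z) for all h ∈ H and z ∈ Z. Consider the set P := {(z, h) ∈ Z × H : h • F(z) = z} equipped with the H-action g • (z, h) := (g • z, g * h * σ(g)⁻¹) (which indeed preserves P). For h ∈ H, the stabilizer H^{hσ} := {g ∈ H : g * h * σ(g)⁻¹ = h} acts on the set Z^{h∘F} := {z ∈ Z : h • F(z) = z}. Then there is a bijection between the set of H-orbits on P and the disjoint union, over a set of representatives h of the σ-conjugacy classes of H (orbits of g • h = g * h * σ(g)⁻¹), of the sets of H^{hσ}-orbits on Z^{h∘F}. -/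
import Mathlib


/-- The σ-twisted conjugation equivalence relation on a group `H`:
`h ~ h'` iff `h' = g * h * (σ g)⁻¹` for some `g`. Its classes are the
σ-conjugacy classes, i.e. the set `H¹(F,H)`. -/
def twistedConjSetoid {H : Type*} [Group H] (σ : H ≃* H) : Setoid H where
  r h h' := ∃ g : H, g * h * (σ g)⁻¹ = h'
  iseqv := by
    constructor
    · intro h; exact ⟨1, by simp⟩
    · rintro h h' ⟨g, rfl⟩
      refine ⟨g⁻¹, ?_⟩
      simp only [map_inv]
      group
    · rintro h h' h'' ⟨g, rfl⟩ ⟨g', rfl⟩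
      refine ⟨g' * g, ?_⟩
      simp only [map_mul]
      group

/-- The orbit equivalence relation for the twisted `H`-action
`g • (z, h) = (g • z, g * h * (σ g)⁻¹)` on the set
`P = {(z, h) | h • F z = z}` of "fixed points of the Frobenius on `[Z/H]`". -/
def pairSetoid {H Z : Type*} [Group H] [MulAction H Z] (σ : H ≃* H) (F : Z → Z) :
    Setoid {p : Z × H // p.2 • F p.1 = p.1} where
  r p q := ∃ g : H, g • p.1.1 = q.1.1 ∧ g * p.1.2 * (σ g)⁻¹ = q.1.2
  iseqv := by
    constructor
    · intro p; exact ⟨1, by simp, by simp⟩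
    · rintro p q ⟨g, h1, h2⟩
      refine ⟨g⁻¹, by rw [← h1, inv_smul_smul], ?_⟩
      rw [← h2]
      simp only [map_inv, inv_inv]
      group
    · rintro p q r ⟨g, h1, h2⟩ ⟨g', h1', h2'⟩
      refine ⟨g' * g, by rw [mul_smul, h1, h1'], ?_⟩
      rw [← h2', ← h2]
      simp only [map_mul, mul_inv_rev]
      group

/-- The orbit equivalence relation for the action of the twisted stabilizer
`H^{hσ} = {g | g * h * (σ g)⁻¹ = h}` on the fixed-point set
`Z^{h∘F} = {z | h • F z = z}`. -/
def fixedSetoid {H Z : Type*} [Group H] [MulAction H Z] (σ : H ≃* H) (F : Z → Z)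
    (h : H) : Setoid {z : Z // h • F z = z} where
  r z z' := ∃ g : H, g * h * (σ g)⁻¹ = h ∧ g • (z : Z) = (z' : Z)
  iseqv := by
    constructor
    · intro z; exact ⟨1, by simp, one_smul _ _⟩
    · rintro z z' ⟨g, hg, hz⟩
      have h2 : g * h = h * σ g := mul_inv_eq_iff_eq_mul.mp hg
      refine ⟨g⁻¹, ?_, by rw [← hz, inv_smul_smul]⟩
      simp only [map_inv, inv_inv]
      rw [mul_assoc, ← h2]
      group
    · rintro z z' z'' ⟨g, hg, hz⟩ ⟨g', hg', hz'⟩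
      refine ⟨g' * g, ?_, by rw [mul_smul, hz, hz']⟩
      calc (g' * g) * h * (σ (g' * g))⁻¹
          = g' * (g * h * (σ g)⁻¹) * (σ g')⁻¹ := by
            simp only [map_mul, mul_inv_rev]; group
        _ = h := by rw [hg]; exact hg'


private lemma fixed_aux {H Z : Type*} [Group H] [MulAction H Z]
    (σ : H ≃* H) (F : Z → Z)
    (hF : ∀ (h : H) (z : Z), F (h • z) = σ h • F z)
    (g h : H) (z : Z) (hz : h • F z = z) :
    (g * h * (σ g)⁻¹) • F (g • z) = g • z := by
  rw [hF, mul_smul, mul_smul, inv_smul_smul, hz]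

/-- For a finite group `H` acting on a finite set `Z`, an
automorphism `σ` of `H` and a map `F : Z → Z` with `F (h • z) = σ h • F z`,
the twisted action `g • (z, h) = (g • z, g * h * (σ g)⁻¹)` preserves
`P = {(z, h) | h • F z = z}`, the twisted stabilizer `H^{hσ}` acts on
`Z^{h∘F}`, and there is a bijection between the set of `H`-orbits on `P` and
the disjoint union, over representatives `h` of the σ-conjugacy classes of
`H`, of the sets of `H^{hσ}`-orbits on `Z^{h∘F}`. -/
theorem fixed_point_groupoid_decomposition
    {H Z : Type*} [Group H] [Finite H] [Finite Z] [MulAction H Z]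
    (σ : H ≃* H) (F : Z → Z)
    (hF : ∀ (h : H) (z : Z), F (h • z) = σ h • F z)
    (rep : Quotient (twistedConjSetoid σ) → H)
    (hrep : ∀ C, Quotient.mk (twistedConjSetoid σ) (rep C) = C) :
    (∀ (g h : H) (z : Z), h • F z = z →
        (g * h * (σ g)⁻¹) • F (g • z) = g • z) ∧
    (∀ (g h : H), g * h * (σ g)⁻¹ = h → ∀ z : Z, h • F z = z →
        h • F (g • z) = g • z) ∧
    Nonempty (Quotient (pairSetoid σ F) ≃
        Σ C : Quotient (twistedConjSetoid σ), Quotient (fixedSetoid σ F (rep C))) := by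
  refine ⟨?_, ?_, ?_⟩
  · intro g h z hz
    rw [hF, mul_smul, mul_smul, inv_smul_smul, hz]
  · intro g h hg z hz
    have := fixed_aux σ F hF g h z hz
    rwa [hg] at this
  · -- build the inverse-direction map and show it is bijective
    set sP := pairSetoid σ F with hsP
    have key : ∀ (C : Quotient (twistedConjSetoid σ))
        (z : {z : Z // rep C • F z = z}), True := fun _ _ => trivial
    let f : (Σ C : Quotient (twistedConjSetoid σ),
        Quotient (fixedSetoid σ F (rep C))) → Quotient sP := fun x =>
      Quotient.lift
        (fun z : {z : Z // rep x.1 • F z = z} =>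
          Quotient.mk sP ⟨((z : Z), rep x.1), z.2⟩)
        (by
          rintro z z' ⟨g, hg, hz⟩
          exact Quot.sound ⟨g, hz, hg⟩) x.2
    have hinj : Function.Injective f := by
      rintro ⟨C, q⟩ ⟨C', q'⟩ hfe
      induction q using Quotient.ind with | _ z =>
      induction q' using Quotient.ind with | _ z' =>
      simp only [f] at hfe
      obtain ⟨g, hz, hg⟩ := Quotient.exact hfe
      have hCC' : C = C' := by
        rw [← hrep C, ← hrep C']
        exact Quot.sound ⟨g, hg⟩
      subst hCC'
      refine Sigma.ext rfl (heq_of_eq ?_)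
      exact Quot.sound ⟨g, hg, hz⟩
    have hsurj : Function.Surjective f := by
      intro q
      induction q using Quotient.ind with | _ p =>
      obtain ⟨⟨z, h⟩, hp⟩ := p
      set C : Quotient (twistedConjSetoid σ) := Quotient.mk _ h with hC
      have hrel : (twistedConjSetoid σ).r (rep C) h :=
        Quotient.exact (by rw [hrep C])
      obtain ⟨g, hg⟩ := hrel
      have hz0 : rep C • F (g⁻¹ • z) = g⁻¹ • z := by
        have := fixed_aux σ F hF g⁻¹ h z hp
        have e : g⁻¹ * h * (σ g⁻¹)⁻¹ = rep C := by
          rw [← hg]; simp only [map_inv, map_mul, mul_inv_rev, inv_inv]; group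
        rwa [e] at this
      refine ⟨⟨C, Quotient.mk _ (⟨g⁻¹ • z, hz0⟩ : {z : Z // rep C • F z = z})⟩, ?_⟩
      simp only [f]
      refine Quot.sound ⟨g, smul_inv_smul g z, ?_⟩
      rw [hg]
    exact ⟨(Equiv.ofBijective f ⟨hinj, hsurj⟩).symm⟩
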